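/- Fix n ≥ 2 and consider the set F_n = {(i, i, (i+1) mod n) : i ∈ Z/nZ} of 'forbidden triples' (together with all their permutations as unordered cycles) on the index set Z/nZ. If π is a permutation of Z/nZ such that a triple (i,j,k) is forbidden if and only if (π(i),π(j),π(k)) is forbidden, then π is of the form π(s) = x + s mod n for some fixed x ∈ Z/nZ. Consequently the group of such permutations is isomorphic to Z/nZ. -/

import Mathlib

/-- A triple `(a,b,c)` of elements of `ZMod n` is a forbidden cycle of type `d`
if, as an unordered multiset, it equals `{i, i, i + d}` for some `i`. -/
def Forb (n : ℕ) (d : ZMod n) (a b c : ZMod n) : Prop :=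
  ∃ i : ZMod n, ({a, b, c} : Multiset (ZMod n)) = {i, i, i + d}

/-- The group of permutations of `ZMod n` preserving the forbidden cycles of type `d`. -/
def autSubgroup (n : ℕ) (d : ZMod n) : Subgroup (Equiv.Perm (ZMod n)) where
  carrier := {π | ∀ a b c : ZMod n, Forb n d a b c ↔ Forb n d (π a) (π b) (π c)}
  one_mem' := by intro a b c; rfl
  mul_mem' := by
    intro π σ hπ hσ a b c
    exact (hσ a b c).trans (hπ _ _ _)
  inv_mem' := by
    intro π hπ a b c
    constructor
    · intro h
      have := (hπ (π⁻¹ a) (π⁻¹ b) (π⁻¹ c)).mpr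
      simp only [Equiv.Perm.coe_inv, Equiv.apply_symm_apply] at this
      exact this h
    · intro h
      have := (hπ (π⁻¹ a) (π⁻¹ b) (π⁻¹ c)).mp h
      simpa using this

lemma forb_key (n : ℕ) (hn : 2 ≤ n) (a b j : ZMod n) (hab : a ≠ b)
    (hm : ({a, a, b} : Multiset (ZMod n)) = {j, j, j + 1}) : b = a + 1 := by
  have h1 : (1 : ZMod n) ≠ 0 := by
    intro h
    have hd : n ∣ 1 := by
      exact_mod_cast (ZMod.natCast_eq_zero_iff 1 n).mp (by exact_mod_cast h)
    have := Nat.dvd_one.mp hd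
    omega
  have hj1 : j ≠ j + 1 := by
    intro h
    apply h1
    have : j + 1 = j + 0 := by rw [add_zero]; exact h.symm
    exact add_left_cancel this
  have hca := congrArg (Multiset.count a) hm
  have hcb := congrArg (Multiset.count b) hm
  have hcj := congrArg (Multiset.count j) hm
  clear hm
  simp [Multiset.insert_eq_cons, Multiset.count_cons, Multiset.count_singleton] at hca hcb hcj
  split_ifs at hca hcb hcj <;> first | omega | (subst_vars; first | rfl | (exfalso; tauto))

lemma forb_succ_step (n : ℕ) (hn : 2 ≤ n) (π : Equiv.Perm (ZMod n))
    (hπ : ∀ a b c : ZMod n, Forb n 1 a b c ↔ Forb n 1 (π a) (π b) (π c)) :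
    ∀ i : ZMod n, π (i + 1) = π i + 1 := by
  have h1 : (1 : ZMod n) ≠ 0 := by
    intro h
    have hd : n ∣ 1 := by
      exact_mod_cast (ZMod.natCast_eq_zero_iff 1 n).mp (by exact_mod_cast h)
    have := Nat.dvd_one.mp hd
    omega
  intro i
  have hforb : Forb n 1 i i (i + 1) := ⟨i, rfl⟩
  obtain ⟨j, hj⟩ := (hπ i i (i + 1)).mp hforb
  have hne : π i ≠ π (i + 1) := by
    intro h
    have := π.injective h
    apply h1
    have h2 : i + 1 = i + 0 := by rw [add_zero]; exact this.symm
    exact add_left_cancel h2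
  exact forb_key n hn (π i) (π (i + 1)) j hne hj

lemma forb_trans_form (n : ℕ) (hn : 2 ≤ n) (π : Equiv.Perm (ZMod n))
    (hπ : ∀ a b c : ZMod n, Forb n 1 a b c ↔ Forb n 1 (π a) (π b) (π c)) :
    ∀ s : ZMod n, π s = π 0 + s := by
  haveI : NeZero n := ⟨by omega⟩
  have hs := forb_succ_step n hn π hπ
  have hnat : ∀ k : ℕ, π (k : ZMod n) = π 0 + k := by
    intro k
    induction k with
    | zero => simp
    | succ m ih => push_cast; rw [hs, ih]; ring
  intro s
  obtain ⟨k, rfl⟩ := ZMod.natCast_zmod_surjective (n := n) s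
  exact hnat k

lemma forb_shift (n : ℕ) (x a b c : ZMod n) (h : Forb n 1 a b c) :
    Forb n 1 (x + a) (x + b) (x + c) := by
  obtain ⟨i, hi⟩ := h
  refine ⟨x + i, ?_⟩
  have := congrArg (Multiset.map (x + ·)) hi
  simpa [add_assoc] using this

lemma addLeft_mem (n : ℕ) (x : ZMod n) :
    (Equiv.addLeft x : Equiv.Perm (ZMod n)) ∈ autSubgroup n 1 := by
  intro a b c
  constructor
  · intro h
    exact forb_shift n x a b c h
  · intro h
    have := forb_shift n (-x) (x + a) (x + b) (x + c) h
    simpa using this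

theorem stmt_2 (n : ℕ) (hn : 2 ≤ n) :
    (∀ π : Equiv.Perm (ZMod n), π ∈ autSubgroup n 1 →
      ∃ x : ZMod n, ∀ s : ZMod n, π s = x + s) ∧
    Nonempty (autSubgroup n 1 ≃* Multiplicative (ZMod n)) := by
  have main : ∀ π : Equiv.Perm (ZMod n), π ∈ autSubgroup n 1 →
      ∃ x : ZMod n, ∀ s : ZMod n, π s = x + s := by
    intro π hπ
    exact ⟨π 0, forb_trans_form n hn π hπ⟩
  refine ⟨main, ⟨?_⟩⟩
  have hmul : ∀ π σ : autSubgroup n 1, (π.1 * σ.1) 0 = π.1 0 + σ.1 0 := by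
    intro π σ
    obtain ⟨x, hx⟩ := main π.1 π.2
    obtain ⟨y, hy⟩ := main σ.1 σ.2
    simp [Equiv.Perm.mul_apply, hx, hy]
  refine MulEquiv.ofBijective
    (⟨⟨fun π => Multiplicative.ofAdd (π.1 0), by simp⟩, by
        intro π σ
        show Multiplicative.ofAdd ((π.1 * σ.1) 0) = _
        rw [hmul π σ]
        rfl⟩ : autSubgroup n 1 →* Multiplicative (ZMod n)) ?_
  constructor
  · intro π σ h
    obtain ⟨x, hx⟩ := main π.1 π.2
    obtain ⟨y, hy⟩ := main σ.1 σ.2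
    have h0 : π.1 0 = σ.1 0 := by exact_mod_cast h
    ext s
    rw [hx, hy]
    have hx0 : π.1 0 = x := by rw [hx 0, add_zero]
    have hy0 : σ.1 0 = y := by rw [hy 0, add_zero]
    rw [← hx0, ← hy0, h0]
  · intro x
    exact ⟨⟨Equiv.addLeft (Multiplicative.toAdd x), addLeft_mem n _⟩, by
      show Multiplicative.ofAdd (Multiplicative.toAdd x + 0) = x
      simp⟩
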